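/- Let x = a + b·i ∈ ℂ with a rational and b irrational. If 2a ∈ ℤ, then OC(x+Γ) = {id, T}, where T is the reflection along the imaginary axis, T(w) = −conj(w); otherwise OC(x+Γ) = {id}. -/

import Mathlib

open Pointwise Complex ComplexConjugate

/-- The square lattice `Γ = ℤ[i]`, i.e. the Gaussian integers viewed as an additive
subgroup of `ℂ`. -/
noncomputable def Zi : AddSubgroup ℂ :=
  AddMonoidHom.range (GaussianInt.toComplex.toAddMonoidHom)

/-- `f` is (the underlying map of) a surjective real-linear isometry of `ℂ`. -/
def IsLinIso (f : ℂ → ℂ) : Prop := ∃ R : ℂ ≃ₗᵢ[ℝ] ℂ, ⇑R = f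

/-- `f` is a rotation of `ℂ`, i.e. multiplication by a complex number of modulus 1. -/
def IsRotation (f : ℂ → ℂ) : Prop := ∃ u : ℂ, ‖u‖ = 1 ∧ ∀ w, f w = u * w

/-- `f` is a reflection of `ℂ`, i.e. `w ↦ u * conj w` for a complex number `u` of
modulus 1. -/
def IsReflection (f : ℂ → ℂ) : Prop := ∃ u : ℂ, ‖u‖ = 1 ∧ ∀ w, f w = u * conj w

/-- The shifted square lattice `x + Γ` as a subset of `ℂ`. -/
noncomputable def shiftedZi (x : ℂ) : Set ℂ := x +ᵥ (Zi : Set ℂ)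

/-- `OC (x+Γ)`: the set of (maps of) surjective real-linear isometries `f` of `ℂ` such
that `(x+Γ) ∩ f(x+Γ)` is a coset `c + Λ`, with `c ∈ x+Γ` and `Λ` a finite-index
additive subgroup of `Γ = ℤ[i]`. -/
noncomputable def OCs (x : ℂ) : Set (ℂ → ℂ) :=
  {f | IsLinIso f ∧ ∃ c ∈ shiftedZi x, ∃ Λ : AddSubgroup ℂ, Λ ≤ Zi ∧
    Λ.relIndex Zi ≠ 0 ∧ shiftedZi x ∩ (f '' shiftedZi x) = c +ᵥ (Λ : Set ℂ)}

/-- `SOC (x+Γ)`: the rotations among the coincidence isometries of `x + Γ`. -/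
noncomputable def SOCs (x : ℂ) : Set (ℂ → ℂ) := {f ∈ OCs x | IsRotation f}

lemma mem_Zi {z : ℂ} : z ∈ Zi ↔ ∃ g : GaussianInt, (g : ℂ) = z := by
  simp [Zi, AddMonoidHom.mem_range]
lemma mem_Zi_iff {z : ℂ} : z ∈ Zi ↔ ∃ m n : ℤ, z = (m : ℂ) + (n : ℂ) * I := by
  rw [mem_Zi]
  constructor
  · rintro ⟨g, rfl⟩
    exact ⟨g.re, g.im, by rw [GaussianInt.toComplex_def]⟩
  · rintro ⟨m, n, rfl⟩
    exact ⟨⟨m, n⟩, GaussianInt.toComplex_def' m n⟩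
lemma Zi_mul {z w : ℂ} (hz : z ∈ Zi) (hw : w ∈ Zi) : z * w ∈ Zi := by
  rw [mem_Zi] at *
  obtain ⟨g, rfl⟩ := hz; obtain ⟨h, rfl⟩ := hw
  exact ⟨g * h, map_mul GaussianInt.toComplex g h⟩
lemma Zi_conj {z : ℂ} (hz : z ∈ Zi) : (conj z) ∈ Zi := by
  rw [mem_Zi] at *
  obtain ⟨g, rfl⟩ := hz
  exact ⟨star g, GaussianInt.toComplex_star g⟩
lemma mem_shiftedZi {x z : ℂ} : z ∈ shiftedZi x ↔ ∃ g ∈ Zi, z = x + g := by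
  simp only [shiftedZi, Set.mem_vadd_set]
  constructor
  · rintro ⟨g, hg, rfl⟩; exact ⟨g, hg, rfl⟩
  · rintro ⟨g, hg, rfl⟩; exact ⟨g, hg, rfl⟩
instance : Infinite Zi :=
  Infinite.of_injective (fun n : ℤ => (⟨(n : ℂ), mem_Zi_iff.mpr ⟨n, 0, by simp⟩⟩ : Zi))
    (fun m n h => by simpa [Subtype.ext_iff] using h)
lemma lin_irr {b : ℝ} (hb : Irrational b) {m : ℤ} (hm : m ≠ 0) {c : ℚ}
    (h : (m : ℝ) * b = (c : ℝ)) : False := by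
  refine hb ⟨c / m, ?_⟩
  have hm' : (m : ℝ) ≠ 0 := Int.cast_ne_zero.mpr hm
  push_cast
  field_simp
  linarith

lemma OCs_cases {r : ℚ} {b : ℝ} (hb : Irrational b) {f : ℂ → ℂ}
    (hf : f ∈ OCs ((r : ℝ) + b * I)) :
    f = id ∨ (f = (fun w => -conj w) ∧ ∃ n : ℤ, (n : ℝ) = 2 * (r : ℝ)) := by
  set x : ℂ := (r : ℝ) + b * I with hx
  obtain ⟨⟨R, hR⟩, c, hc, Λ, hΛle, hΛind, hset⟩ := hf
  -- a nonzero element of Λ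
  have hΛbot : Λ ≠ ⊥ := by
    rintro rfl
    rw [AddSubgroup.relIndex_bot_left] at hΛind
    exact hΛind Nat.card_eq_zero_of_infinite
  obtain ⟨l, hlΛ, hl0⟩ : ∃ t ∈ Λ, t ≠ 0 := by
    by_contra h
    push_neg at h
    exact hΛbot ((AddSubgroup.eq_bot_iff_forall Λ).mpr h)
  have hlZi : l ∈ Zi := hΛle hlΛ
  -- c and c + l are in the intersection
  have hcmem : c ∈ shiftedZi x ∩ (f '' shiftedZi x) := by
    rw [hset, Set.mem_vadd_set]
    exact ⟨0, Λ.zero_mem, by simp⟩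
  have hclmem : c + l ∈ shiftedZi x ∩ (f '' shiftedZi x) := by
    rw [hset, Set.mem_vadd_set]
    exact ⟨l, hlΛ, rfl⟩
  obtain ⟨γ1, hγ1, hcx⟩ := mem_shiftedZi.mp hc
  obtain ⟨z2, hz2, hfz2⟩ := hcmem.2
  obtain ⟨γ2, hγ2, rfl⟩ := mem_shiftedZi.mp hz2
  obtain ⟨z3, hz3, hfz3⟩ := hclmem.2
  obtain ⟨γ3, hγ3, rfl⟩ := mem_shiftedZi.mp hz3
  obtain ⟨u, hu | hu⟩ := linear_isometry_complex R
  · -- rotation case: f = id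
    have hfw : ∀ w, f w = (u : ℂ) * w := fun w => by rw [← hR, hu, rotation_apply]
    rw [hfw] at hfz2 hfz3
    have hleq : (u : ℂ) * (γ3 - γ2) = l := by linear_combination hfz3 - hfz2
    by_cases hu1 : (u : ℂ) = 1
    · left; funext w; rw [hfw w, hu1, one_mul]; rfl
    exfalso
    have hgZi : γ3 - γ2 ∈ Zi := Zi.sub_mem hγ3 hγ2
    have heq : x + γ1 = (u : ℂ) * (x + γ2) := by rw [← hcx, ← hfz2]
    have hmul : ((γ3 - γ2) - l) * x = l * γ2 - (γ3 - γ2) * γ1 := by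
      linear_combination (γ3 - γ2) * heq + (x + γ2) * hleq
    have hglZi : (γ3 - γ2) - l ∈ Zi := Zi.sub_mem hgZi hlZi
    have hg0 : (γ3 - γ2) ≠ 0 := fun h0 => hl0 (by rw [← hleq, h0, mul_zero])
    have hgl0 : (γ3 - γ2) - l ≠ 0 := by
      intro h0
      have hz : (1 - (u : ℂ)) * (γ3 - γ2) = 0 := by linear_combination h0 - hleq
      rcases mul_eq_zero.mp hz with h' | h'
      · exact hu1 (sub_eq_zero.mp h').symm
      · exact hg0 h'
    have hwZi : l * γ2 - (γ3 - γ2) * γ1 ∈ Zi := Zi.sub_mem (Zi_mul hlZi hγ2) (Zi_mul hgZi hγ1)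
    obtain ⟨m, n, hmn⟩ := mem_Zi_iff.mp hglZi
    obtain ⟨p, q, hpq⟩ := mem_Zi_iff.mp hwZi
    rw [hmn, hpq, hx] at hmul
    have h1 := congrArg Complex.re hmul
    have h2 := congrArg Complex.im hmul
    simp [Complex.mul_re, Complex.mul_im] at h1 h2
    by_cases hm : m = 0
    · have hn : n ≠ 0 := by
        intro hn
        rw [hmn, hm, hn] at hgl0
        simp at hgl0
      refine lin_irr hb hn (c := -p) ?_
      push_cast
      rw [hm] at h1
      push_cast at h1
      linarith
    · refine lin_irr hb hm (c := q - n * r) ?_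
      push_cast
      linarith
  · -- reflection case
    have hfw : ∀ w, f w = (u : ℂ) * conj w := fun w => by
      rw [← hR, hu]; simp
    rw [hfw] at hfz2 hfz3
    have hleq : (u : ℂ) * (conj γ3 - conj γ2) = l := by
      rw [map_add, map_add] at hfz3 hfz2
      linear_combination hfz3 - hfz2
    set h : ℂ := conj γ3 - conj γ2 with hhdef
    have hhZi : h ∈ Zi := Zi.sub_mem (Zi_conj hγ3) (Zi_conj hγ2)
    have hh0 : h ≠ 0 := by
      intro h0; rw [h0, mul_zero] at hleq; exact hl0 hleq.symm
    have heq : x + γ1 = (u : ℂ) * (conj x + conj γ2) := by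
      rw [← hcx, ← hfz2, map_add]
    have hmul : h * x - l * conj x = l * conj γ2 - h * γ1 := by
      linear_combination h * heq + (conj x + conj γ2) * hleq
    have hwZi : l * conj γ2 - h * γ1 ∈ Zi :=
      Zi.sub_mem (Zi_mul hlZi (Zi_conj hγ2)) (Zi_mul hhZi hγ1)
    obtain ⟨m, n, hmn⟩ := mem_Zi_iff.mp hhZi
    obtain ⟨p, q, hpq⟩ := mem_Zi_iff.mp hlZi
    obtain ⟨s, t, hst⟩ := mem_Zi_iff.mp hwZi
    rw [hst, hmn, hpq, hx] at hmul
    have h1 := congrArg Complex.re hmul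
    have h2 := congrArg Complex.im hmul
    simp [Complex.mul_re, Complex.mul_im] at h1 h2
    -- derive p = -m and q = -n
    have hpm : p = -m := by
      by_contra hne
      have : m + p ≠ 0 := fun h0 => hne (by omega)
      refine lin_irr hb this (c := t - (n - q) * r) ?_
      push_cast
      linarith
    have hqn : q = -n := by
      by_contra hne
      have : -(n + q) ≠ 0 := by
        intro h0
        apply hne
        omega
      refine lin_irr hb this (c := s - (m - p) * r) ?_
      push_cast
      linarith
    have hlh : l = -h := by
      rw [hmn, hpq, hpm, hqn]
      push_cast
      ring
    have hum1 : (u : ℂ) = -1 := by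
      have : (u : ℂ) * h = -h := by rw [hleq, hlh]
      have h2' : ((u : ℂ) + 1) * h = 0 := by linear_combination this
      rcases mul_eq_zero.mp h2' with h' | h'
      · exact eq_neg_of_add_eq_zero_left h'
      · exact absurd h' hh0
    right
    constructor
    · funext w; rw [hfw w, hum1]; ring
    · -- 2r ∈ ℤ
      have h2a : (x + conj x) = -γ1 - conj γ2 := by
        rw [hum1] at heq
        linear_combination heq
      have hmem2 : -γ1 - conj γ2 ∈ Zi := by
        refine Zi.sub_mem (Zi.neg_mem hγ1) (Zi_conj hγ2)
      obtain ⟨m', n', hmn'⟩ := mem_Zi_iff.mp hmem2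
      rw [hmn'] at h2a
      refine ⟨m', ?_⟩
      have := congrArg Complex.re h2a
      simp [hx] at this
      linarith

lemma self_mem_shiftedZi (x : ℂ) : x ∈ shiftedZi x :=
  mem_shiftedZi.mpr ⟨0, Zi.zero_mem, by simp⟩

lemma id_mem_OCs (x : ℂ) : id ∈ OCs x := by
  refine ⟨⟨LinearIsometryEquiv.refl ℝ ℂ, rfl⟩, x, self_mem_shiftedZi x, Zi, le_refl _,
    by rw [AddSubgroup.relIndex_self]; exact one_ne_zero, ?_⟩
  rw [Set.image_id, Set.inter_self]
  rfl

lemma refl_mem_OCs (a b : ℝ) (n : ℤ) (hn : (n : ℝ) = 2 * a) :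
    (fun w => -conj w) ∈ OCs ((a : ℂ) + b * I) := by
  set x : ℂ := (a : ℂ) + b * I with hx
  have hnC : ((n : ℤ) : ℂ) = 2 * (a : ℂ) := by exact_mod_cast congrArg (fun t : ℝ => (t : ℂ)) hn
  have hsub : ∀ z ∈ shiftedZi x, -conj z ∈ shiftedZi x := by
    intro z hz
    obtain ⟨g, hg, rfl⟩ := mem_shiftedZi.mp hz
    refine mem_shiftedZi.mpr ⟨-(n : ℂ) - conj g, Zi.sub_mem (Zi.neg_mem
      (mem_Zi_iff.mpr ⟨n, 0, by simp⟩)) (Zi_conj hg), ?_⟩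
    rw [map_add, hx, hnC]
    simp only [map_add, map_mul, conj_ofReal, conj_I]
    ring
  have himg : (fun w => -conj w) '' shiftedZi x = shiftedZi x := by
    ext z
    constructor
    · rintro ⟨y, hy, rfl⟩; exact hsub y hy
    · intro hz
      exact ⟨-conj z, hsub z hz, by simp⟩
  refine ⟨⟨conjLIE.trans (LinearIsometryEquiv.neg ℝ), by funext w; simp⟩,
    x, self_mem_shiftedZi x, Zi, le_refl _,
    by rw [AddSubgroup.relIndex_self]; exact one_ne_zero, ?_⟩
  rw [himg, Set.inter_self]
  rfl

theorem OC_of_rational_re_irrational_im (a b : ℝ) (ha : ∃ r : ℚ, (r : ℝ) = a)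
    (hb : Irrational b) :
    ((∃ n : ℤ, (n : ℝ) = 2 * a) →
        OCs (a + b * I) = ({id, fun w => -conj w} : Set (ℂ → ℂ))) ∧
      (¬(∃ n : ℤ, (n : ℝ) = 2 * a) → OCs (a + b * I) = ({id} : Set (ℂ → ℂ))) := by
  obtain ⟨r, rfl⟩ := ha
  constructor
  · rintro ⟨n, hn⟩
    ext f
    simp only [Set.mem_insert_iff, Set.mem_singleton_iff]
    constructor
    · intro hf
      rcases OCs_cases hb hf with h | ⟨h, _⟩
      · exact Or.inl h
      · exact Or.inr h
    · rintro (rfl | rfl)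
      · exact id_mem_OCs _
      · exact refl_mem_OCs _ b n hn
  · intro hno
    ext f
    simp only [Set.mem_singleton_iff]
    constructor
    · intro hf
      rcases OCs_cases hb hf with h | ⟨_, hex⟩
      · exact h
      · exact absurd hex hno
    · rintro rfl
      exact id_mem_OCs _
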